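/- In the two-player beauty contest game, for every player i, every k ≥ 1 and every n ≥ 1, the Δ^κ-rationalization procedure yields Σⁿ_{θ_{ik}} = {(θ_{ik}, 0)}: the unique Δ^κ-rationalizable action of every positive-level type is 0. -/

import Mathlib

open scoped BigOperators
open Classical

noncomputable section

/-- A belief of a player: a probability distribution over
(opponent level-type, opponent action) pairs. -/
structure Belief (B : Type*) where
  p : ℕ × B → ℝ
  nonneg : ∀ x, 0 ≤ p x
  hasSum_one : HasSum p 1

/-- Marginal probability assigned to the opponent's level-`t` type. -/
def Belief.marg {B : Type*} [Fintype B] (μ : Belief B) (t : ℕ) : ℝ := ∑ b : B, μ.p (t, b)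

/-- Probability assigned by a belief to a set of (level, action) pairs. -/
def Belief.probOn {B : Type*} (μ : Belief B) (S : Set (ℕ × B)) : ℝ := ∑' x, S.indicator μ.p x

/-- `f` normalized to the levels `0, …, k-1` (denoted `f^k` in the paper). -/
def fnorm (f : ℕ → ℝ) (k t : ℕ) : ℝ := f t / ∑ ℓ ∈ Finset.range k, f ℓ

/-- Membership in `Δ^{θ_{ik}}`: conditions K1–K3 for `k ≥ 1`; no restriction for `k = 0`. -/
def memDelta {B : Type*} [Fintype B] (f : ℕ → ℝ) (k : ℕ) (μ : Belief B) : Prop :=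
  k ≠ 0 →
    ((∀ t, k ≤ t → μ.marg t = 0) ∧
     (0 < μ.marg 0 → ∀ b : B, μ.p (0, b) / μ.marg 0 = 1 / (Fintype.card B : ℝ)) ∧
     (∀ t, t < k → μ.marg t = fnorm f k t))

/-- Expected payoff of own action `a` for the own level-`k` type given belief `μ`:
the level-0 type's payoff is constant `0`, all other types get `v`. -/
def expPay {A B : Type*} (v : A → B → ℝ) (k : ℕ) (μ : Belief B) (a : A) : ℝ :=
  ∑' x : ℕ × B, μ.p x * (if k = 0 then 0 else v a x.2)

/-- `a` is a best response to belief `μ` under the own level-`k` type. -/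
def isBR {A B : Type*} (v : A → B → ℝ) (k : ℕ) (μ : Belief B) (a : A) : Prop :=
  ∀ a' : A, expPay v k μ a' ≤ expPay v k μ a

/-- The Δ^κ-rationalization procedure; component 1 is player 1's set of surviving
(level, action) pairs, component 2 is player 2's. -/
def SigmaProc {A B : Type*} [Fintype A] [Fintype B]
    (v1 : A → B → ℝ) (v2 : B → A → ℝ) (f : ℕ → ℝ) :
    ℕ → Set (ℕ × A) × Set (ℕ × B)
  | 0 => (Set.univ, Set.univ)
  | n + 1 =>
      let P := SigmaProc v1 v2 f n
      ({x | x ∈ P.1 ∧ ∃ μ : Belief B, memDelta f x.1 μ ∧ μ.probOn P.2 = 1 ∧ isBR v1 x.1 μ x.2},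
       {y | y ∈ P.2 ∧ ∃ μ : Belief A, memDelta f y.1 μ ∧ μ.probOn P.1 = 1 ∧ isBR v2 y.1 μ y.2})

/-- The section `Σⁿ_{θ_{1k}}` of player 1 (as a set of actions). -/
def SigmaSec1 {A B : Type*} [Fintype A] [Fintype B]
    (v1 : A → B → ℝ) (v2 : B → A → ℝ) (f : ℕ → ℝ) (n k : ℕ) : Set A :=
  {a | (k, a) ∈ (SigmaProc v1 v2 f n).1}

/-- The section `Σⁿ_{θ_{2k}}` of player 2 (as a set of actions). -/
def SigmaSec2 {A B : Type*} [Fintype A] [Fintype B]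
    (v1 : A → B → ℝ) (v2 : B → A → ℝ) (f : ℕ → ℝ) (n k : ℕ) : Set B :=
  {b | (k, b) ∈ (SigmaProc v1 v2 f n).2}

/-- The CH-procedure requirement on beliefs at step `n+1`, given the previous
sections `Ψⁿ` of the opponent: the support of `μ` equals `∪_{t=0}^{n} Ψⁿ_{θ_{-i,t}}`
and `μ` is conditionally uniform over each `Ψⁿ_{θ_{-i,t}}`. -/
def CHBelief {B : Type*} (Ψ : ℕ → Set B) (n : ℕ) (μ : Belief B) : Prop :=
  (∀ x : ℕ × B, μ.p x ≠ 0 ↔ x.1 ≤ n ∧ x.2 ∈ Ψ x.1) ∧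
  (∀ t, t ≤ n → ∀ b b' : B, b ∈ Ψ t → b' ∈ Ψ t → μ.p (t, b) = μ.p (t, b'))

/-- The CH-procedure: step `n` returns, for each player and each level `k`,
the set of actions in `Ψⁿ_{θ_{ik}}`. -/
def CHProc {A B : Type*} [Fintype A] [Fintype B]
    (v1 : A → B → ℝ) (v2 : B → A → ℝ) (f : ℕ → ℝ) :
    ℕ → (ℕ → Set A) × (ℕ → Set B)
  | 0 => (fun _ => Set.univ, fun _ => Set.univ)
  | n + 1 =>
      let P := CHProc v1 v2 f n
      (fun k =>
        if k = n + 1 then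
          {a | ∃ μ : Belief B, memDelta f (n + 1) μ ∧ CHBelief P.2 n μ ∧ isBR v1 (n + 1) μ a}
        else P.1 k,
       fun k =>
        if k = n + 1 then
          {b | ∃ μ : Belief A, memDelta f (n + 1) μ ∧ CHBelief P.1 n μ ∧ isBR v2 (n + 1) μ b}
        else P.2 k)

/-- `Ψⁿ_{θ_{1k}}` for player 1 (as a set of actions). -/
def CHSec1 {A B : Type*} [Fintype A] [Fintype B]
    (v1 : A → B → ℝ) (v2 : B → A → ℝ) (f : ℕ → ℝ) (n k : ℕ) : Set A :=
  (CHProc v1 v2 f n).1 k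

/-- `Ψⁿ_{θ_{2k}}` for player 2 (as a set of actions). -/
def CHSec2 {A B : Type*} [Fintype A] [Fintype B]
    (v1 : A → B → ℝ) (v2 : B → A → ℝ) (f : ℕ → ℝ) (n k : ℕ) : Set B :=
  (CHProc v1 v2 f n).2 k

end


/-- The target `a* = (2/3)·(a₁+a₂)/2` in the beauty contest game. -/
noncomputable def bcStar (a b : Fin 101) : ℝ := (2 / 3) * (((a : ℕ) + (b : ℕ) : ℝ) / 2)

/-- Beauty contest payoff: the player closer to `a*` (weakly) wins 1, else 0. -/
noncomputable def bcPay (a b : Fin 101) : ℝ :=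
  if |((a : ℕ) : ℝ) - bcStar a b| ≤ |((b : ℕ) : ℝ) - bcStar a b| then 1 else 0

-- helper section to append before theorem
section BCHelpers

open Finset

lemma bcPay_eq (a b : Fin 101) : bcPay a b = if (a:ℕ) ≤ (b:ℕ) then 1 else 0 := by
  unfold bcPay bcStar
  have hx : (0:ℝ) ≤ ((a:ℕ):ℝ) := Nat.cast_nonneg _
  have hy : (0:ℝ) ≤ ((b:ℕ):ℝ) := Nat.cast_nonneg _
  have hiff : |((a:ℕ):ℝ) - 2/3*((((a:ℕ):ℝ)+((b:ℕ):ℝ))/2)| ≤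
      |((b:ℕ):ℝ) - 2/3*((((a:ℕ):ℝ)+((b:ℕ):ℝ))/2)| ↔ (a:ℕ) ≤ (b:ℕ) := by
    constructor
    · intro hC
      by_contra hab
      have hab' : (b:ℕ) < (a:ℕ) := Nat.lt_of_not_le hab
      have h' : ((b:ℕ):ℝ) < ((a:ℕ):ℝ) := by exact_mod_cast hab'
      have h1 : (1:ℝ) ≤ ((a:ℕ):ℝ) := by
        have : 1 ≤ (a:ℕ) := by omega
        exact_mod_cast this
      have hu : (0:ℝ) ≤ ((a:ℕ):ℝ) - 2/3*((((a:ℕ):ℝ)+((b:ℕ):ℝ))/2) := by linarith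
      rw [abs_of_nonneg hu] at hC
      have hBlt : |((b:ℕ):ℝ) - 2/3*((((a:ℕ):ℝ)+((b:ℕ):ℝ))/2)| <
          ((a:ℕ):ℝ) - 2/3*((((a:ℕ):ℝ)+((b:ℕ):ℝ))/2) := by
        rw [abs_lt]
        constructor <;> linarith
      linarith
    · intro hab
      have h' : ((a:ℕ):ℝ) ≤ ((b:ℕ):ℝ) := by exact_mod_cast hab
      have hv : (0:ℝ) ≤ ((b:ℕ):ℝ) - 2/3*((((a:ℕ):ℝ)+((b:ℕ):ℝ))/2) := by linarith
      rw [abs_of_nonneg hv, abs_le]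
      constructor <;> linarith
  simp only [hiff]

lemma bcPay_nonneg (a b : Fin 101) : 0 ≤ bcPay a b := by
  rw [bcPay_eq]; split_ifs <;> norm_num

lemma bcPay_le_one (a b : Fin 101) : bcPay a b ≤ 1 := by
  rw [bcPay_eq]; split_ifs <;> norm_num

lemma bcPay_zero_left (b : Fin 101) : bcPay 0 b = 1 := by
  rw [bcPay_eq, if_pos]; simp

lemma bcPay_pos_zero {a : Fin 101} (ha : a ≠ 0) : bcPay a 0 = 0 := by
  rw [bcPay_eq, if_neg]
  simp only [Fin.val_zero, Nat.le_zero]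
  exact fun h => ha (Fin.ext (by simpa using h))

lemma expPay_level_zero {A B : Type*} (v : A → B → ℝ) (μ : Belief B) (a : A) :
    expPay v 0 μ a = 0 := by
  simp [expPay]

lemma expPay_ne_zero {A B : Type*} (v : A → B → ℝ) {k : ℕ} (hk : k ≠ 0) (μ : Belief B) (a : A) :
    expPay v k μ a = ∑' x : ℕ × B, μ.p x * v a x.2 := by
  unfold expPay
  exact tsum_congr fun x => by rw [if_neg hk]

lemma summable_g (μ : Belief (Fin 101)) (a : Fin 101) :
    Summable (fun x : ℕ × Fin 101 => μ.p x * bcPay a x.2) :=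
  Summable.of_nonneg_of_le
    (fun x => mul_nonneg (μ.nonneg x) (bcPay_nonneg _ _))
    (fun x => mul_le_of_le_one_right (μ.nonneg x) (bcPay_le_one _ _))
    μ.hasSum_one.summable

lemma expPay_at_zero {k : ℕ} (hk : k ≠ 0) (μ : Belief (Fin 101)) :
    expPay bcPay k μ (0 : Fin 101) = 1 := by
  rw [expPay_ne_zero bcPay hk]
  have : ∀ x : ℕ × Fin 101, μ.p x * bcPay 0 x.2 = μ.p x := by
    intro x; rw [bcPay_zero_left, mul_one]
  rw [tsum_congr this]
  exact μ.hasSum_one.tsum_eq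

lemma expPay_le_one {k : ℕ} (hk : k ≠ 0) (μ : Belief (Fin 101)) (a : Fin 101) :
    expPay bcPay k μ a ≤ 1 := by
  rw [expPay_ne_zero bcPay hk]
  calc ∑' x : ℕ × Fin 101, μ.p x * bcPay a x.2
      ≤ ∑' x : ℕ × Fin 101, μ.p x :=
        Summable.tsum_le_tsum (fun x => mul_le_of_le_one_right (μ.nonneg x) (bcPay_le_one _ _))
          (summable_g μ a) μ.hasSum_one.summable
    _ = 1 := μ.hasSum_one.tsum_eq

lemma fnorm_pos (f : ℕ → ℝ) (hf : ∀ n, 0 < f n) {k : ℕ} (hk : k ≠ 0) (t : ℕ) :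
    0 < fnorm f k t :=
  div_pos (hf t) (Finset.sum_pos (fun i _ => hf i) (Finset.nonempty_range_iff.mpr hk))

lemma expPay_lt_one (f : ℕ → ℝ) (hf : ∀ n, 0 < f n) {k : ℕ} (hk : k ≠ 0)
    (μ : Belief (Fin 101)) (hμ : memDelta f k μ) {a : Fin 101} (ha : a ≠ 0) :
    expPay bcPay k μ a < 1 := by
  obtain ⟨hK1, hK2, hK3⟩ := hμ hk
  have hmarg : μ.marg 0 = fnorm f k 0 := hK3 0 (Nat.pos_of_ne_zero hk)
  have hmpos : 0 < μ.marg 0 := hmarg ▸ fnorm_pos f hf hk 0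
  have hdiv := hK2 hmpos (0 : Fin 101)
  have hcard : (Fintype.card (Fin 101) : ℝ) = 101 := by simp
  have hε : 0 < μ.p (0, (0 : Fin 101)) := by
    rw [div_eq_iff (ne_of_gt hmpos)] at hdiv
    rw [hdiv, hcard]
    exact mul_pos (by norm_num) hmpos
  rw [expPay_ne_zero bcPay hk]
  have hsg : Summable (fun x : ℕ × Fin 101 => μ.p x * bcPay a x.2) := summable_g μ a
  have hsp : Summable μ.p := μ.hasSum_one.summable
  have hsub : Summable (fun x : ℕ × Fin 101 => μ.p x - μ.p x * bcPay a x.2) := hsp.sub hsg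
  have hle : μ.p (0, (0:Fin 101)) ≤
      ∑' x : ℕ × Fin 101, (μ.p x - μ.p x * bcPay a x.2) := by
    have h00 : μ.p (0, (0:Fin 101)) =
        μ.p (0, (0:Fin 101)) - μ.p (0, (0:Fin 101)) * bcPay a (0:Fin 101) := by
      rw [bcPay_pos_zero ha, mul_zero, sub_zero]
    rw [h00]
    exact Summable.le_tsum hsub (0, (0:Fin 101)) (fun x _ =>
      sub_nonneg.mpr (mul_le_of_le_one_right (μ.nonneg x) (bcPay_le_one _ _)))
  rw [Summable.tsum_sub hsp hsg, μ.hasSum_one.tsum_eq] at hle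
  linarith

/-- The witness belief: level `t < k` gets mass `fnorm f k t`, uniform over actions for
`t = 0`, point mass on action `0` for `t ≥ 1`. -/
noncomputable def pW (f : ℕ → ℝ) (k : ℕ) : ℕ × Fin 101 → ℝ := fun x =>
  if x.1 < k then fnorm f k x.1 * (if x.1 = 0 then (101:ℝ)⁻¹ else if x.2 = 0 then 1 else 0)
  else 0

lemma pW_nonneg (f : ℕ → ℝ) (hf : ∀ n, 0 < f n) {k : ℕ} (hk : k ≠ 0) (x : ℕ × Fin 101) :
    0 ≤ pW f k x := by
  unfold pW
  split_ifs with h1 h2 h3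
  · exact mul_nonneg (fnorm_pos f hf hk _).le (by norm_num)
  · exact mul_nonneg (fnorm_pos f hf hk _).le (by norm_num)
  · exact mul_nonneg (fnorm_pos f hf hk _).le (by norm_num)
  · exact le_rfl

lemma pW_support {f : ℕ → ℝ} {k : ℕ} {x : ℕ × Fin 101} (h : pW f k x ≠ 0) :
    x.1 = 0 ∨ x.2 = 0 := by
  by_cases h1 : x.1 = 0
  · exact Or.inl h1
  · by_cases h2 : x.2 = 0
    · exact Or.inr h2
    · exfalso; apply h; simp [pW, h1, h2]

lemma pW_sum_fiber (f : ℕ → ℝ) (k t : ℕ) :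
    ∑ b : Fin 101, pW f k (t, b) = if t < k then fnorm f k t else 0 := by
  by_cases ht : t < k
  · rw [if_pos ht]
    by_cases ht0 : t = 0
    · subst ht0
      have hb : ∀ b : Fin 101, pW f k (0, b) = fnorm f k 0 * (101:ℝ)⁻¹ := by
        intro b; simp [pW, ht]
      rw [Finset.sum_congr rfl (fun b _ => hb b), Finset.sum_const, Finset.card_univ,
        Fintype.card_fin, nsmul_eq_mul]
      ring
    · have hb : ∀ b : Fin 101, pW f k (t, b) = if b = 0 then fnorm f k t else 0 := by
        intro b; simp [pW, ht, ht0, mul_ite, mul_one, mul_zero]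
      rw [Finset.sum_congr rfl (fun b _ => hb b)]
      simp
  · rw [if_neg ht]
    simp [pW, ht]

lemma pW_hasSum (f : ℕ → ℝ) (hf : ∀ n, 0 < f n) {k : ℕ} (hk : k ≠ 0) :
    HasSum (pW f k) 1 := by
  have hS : (0:ℝ) < ∑ ℓ ∈ Finset.range k, f ℓ :=
    Finset.sum_pos (fun i _ => hf i) (Finset.nonempty_range_iff.mpr hk)
  have h0 : ∀ x ∉ (Finset.range k) ×ˢ (Finset.univ : Finset (Fin 101)), pW f k x = 0 := by
    intro x hx
    rw [Finset.mem_product] at hx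
    push_neg at hx
    have : ¬ x.1 < k := by
      intro hlt
      exact absurd (Finset.mem_univ x.2) (hx (Finset.mem_range.mpr hlt))
    simp [pW, this]
  have hsum : HasSum (pW f k) _ := hasSum_sum_of_ne_finset_zero h0
  have heq : ∑ x ∈ (Finset.range k) ×ˢ (Finset.univ : Finset (Fin 101)), pW f k x = 1 := by
    rw [Finset.sum_product]
    have : ∀ t ∈ Finset.range k, ∑ b : Fin 101, pW f k (t, b) = fnorm f k t := by
      intro t ht
      rw [pW_sum_fiber, if_pos (Finset.mem_range.mp ht)]
    rw [Finset.sum_congr rfl this]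
    unfold fnorm
    rw [← Finset.sum_div, div_self (ne_of_gt hS)]
  rwa [heq] at hsum

noncomputable def μW (f : ℕ → ℝ) (hf : ∀ n, 0 < f n) (k : ℕ) (hk : k ≠ 0) :
    Belief (Fin 101) where
  p := pW f k
  nonneg := pW_nonneg f hf hk
  hasSum_one := pW_hasSum f hf hk

lemma μW_marg (f : ℕ → ℝ) (hf : ∀ n, 0 < f n) (k : ℕ) (hk : k ≠ 0) (t : ℕ) :
    (μW f hf k hk).marg t = if t < k then fnorm f k t else 0 :=
  pW_sum_fiber f k t

lemma memDelta_zero {B : Type*} [Fintype B] (f : ℕ → ℝ) (μ : Belief B) :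
    memDelta f 0 μ := fun h => absurd rfl h

lemma μW_memDelta_self (f : ℕ → ℝ) (hf : ∀ n, 0 < f n) (k : ℕ) (hk : k ≠ 0) :
    memDelta f k (μW f hf k hk) := by
  intro _
  refine ⟨?_, ?_, ?_⟩
  · intro t hle
    rw [μW_marg, if_neg (not_lt.mpr hle)]
  · intro hpos b
    have hm : (μW f hf k hk).marg 0 = fnorm f k 0 := by
      rw [μW_marg, if_pos (Nat.pos_of_ne_zero hk)]
    have hp : (μW f hf k hk).p (0, b) = fnorm f k 0 * (101:ℝ)⁻¹ := by
      show pW f k (0, b) = _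
      simp [pW, Nat.pos_of_ne_zero hk]
    rw [hp, hm, Fintype.card_fin]
    have h0 : fnorm f k 0 ≠ 0 := ne_of_gt (fnorm_pos f hf hk 0)
    rw [mul_comm, mul_div_assoc, div_self h0, mul_one, one_div]
    norm_num
  · intro t htk
    rw [μW_marg, if_pos htk]

lemma probOn_of_support {B : Type*} (μ : Belief B) (T : Set (ℕ × B))
    (h : ∀ x, μ.p x ≠ 0 → x ∈ T) : μ.probOn T = 1 := by
  unfold Belief.probOn
  have heq : T.indicator μ.p = μ.p := by
    funext x
    by_cases hx : x ∈ T
    · exact Set.indicator_of_mem hx _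
    · rw [Set.indicator_of_notMem hx]
      rcases eq_or_ne (μ.p x) 0 with h0 | h0
      · exact h0.symm
      · exact absurd (h x h0) hx
  rw [heq]
  exact μ.hasSum_one.tsum_eq

lemma sigma_symm (f : ℕ → ℝ) :
    ∀ n, (SigmaProc bcPay bcPay f n).1 = (SigmaProc bcPay bcPay f n).2
  | 0 => rfl
  | n + 1 => by
      show {x : ℕ × Fin 101 | x ∈ (SigmaProc bcPay bcPay f n).1 ∧
              ∃ μ : Belief (Fin 101), memDelta f x.1 μ ∧
                μ.probOn (SigmaProc bcPay bcPay f n).2 = 1 ∧ isBR bcPay x.1 μ x.2} =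
            {y : ℕ × Fin 101 | y ∈ (SigmaProc bcPay bcPay f n).2 ∧
              ∃ μ : Belief (Fin 101), memDelta f y.1 μ ∧
                μ.probOn (SigmaProc bcPay bcPay f n).1 = 1 ∧ isBR bcPay y.1 μ y.2}
      rw [sigma_symm f n]

lemma key_mem (f : ℕ → ℝ) (hf : ∀ n, 0 < f n) :
    ∀ n, ∀ x : ℕ × Fin 101, (x.1 = 0 ∨ x.2 = 0) →
      x ∈ (SigmaProc bcPay bcPay f n).1 := by
  intro n
  induction n with
  | zero => intro x _; trivial
  | succ n ih =>
    intro x hx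
    have hsub : ∀ y : ℕ × Fin 101, (y.1 = 0 ∨ y.2 = 0) →
        y ∈ (SigmaProc bcPay bcPay f n).2 := by
      intro y hy
      rw [← sigma_symm f n]
      exact ih y hy
    refine ⟨ih x hx, ?_⟩
    by_cases hx1 : x.1 = 0
    · refine ⟨μW f hf 1 one_ne_zero, ?_, ?_, ?_⟩
      · rw [hx1]; exact memDelta_zero f _
      · exact probOn_of_support _ _ (fun y hy => hsub y (pW_support hy))
      · intro a'
        rw [hx1, expPay_level_zero, expPay_level_zero]
    · have hx2 : x.2 = 0 := hx.resolve_left hx1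
      refine ⟨μW f hf x.1 hx1, μW_memDelta_self f hf x.1 hx1, ?_, ?_⟩
      · exact probOn_of_support _ _ (fun y hy => hsub y (pW_support hy))
      · intro a'
        rw [hx2, expPay_at_zero hx1]
        exact expPay_le_one hx1 _ a'

lemma sigma_anti (f : ℕ → ℝ) (n : ℕ) :
    (SigmaProc bcPay bcPay f (n+1)).1 ⊆ (SigmaProc bcPay bcPay f n).1 :=
  fun _ hx => hx.1

lemma sigma_le_one (f : ℕ → ℝ) :
    ∀ n, 1 ≤ n → (SigmaProc bcPay bcPay f n).1 ⊆ (SigmaProc bcPay bcPay f 1).1 := by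
  intro n
  induction n with
  | zero => omega
  | succ n ih =>
    intro _
    rcases Nat.eq_zero_or_pos n with rfl | hn
    · exact fun _ h => h
    · exact fun x hx => ih hn (sigma_anti f n hx)

end BCHelpers


/-- in the beauty contest game, for every n ≥ 1 and k ≥ 1, the unique
Δ^κ-rationalizable action of the level-k type of each player is 0. -/
theorem beauty_contest_sigma
    (f : ℕ → ℝ) (hf : ∀ n, 0 < f n) (hfsum : HasSum f 1) :
    ∀ n k : ℕ, 1 ≤ n → 1 ≤ k →
      SigmaSec1 bcPay bcPay f n k = {0} ∧ SigmaSec2 bcPay bcPay f n k = {0} := by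
  intro n k hn hk
  have hk0 : k ≠ 0 := by omega
  have huniq : ∀ a : Fin 101, (k, a) ∈ (SigmaProc bcPay bcPay f n).1 → a = 0 := by
    intro a ha
    have h1 : (k, a) ∈ (SigmaProc bcPay bcPay f 1).1 := sigma_le_one f n hn ha
    obtain ⟨-, μ, hμ, -, hbr⟩ := h1
    by_contra hne
    have hlt := expPay_lt_one f hf hk0 μ hμ hne
    have hge := hbr 0
    rw [expPay_at_zero hk0] at hge
    linarith
  have hmem1 : ((k, (0:Fin 101)) : ℕ × Fin 101) ∈ (SigmaProc bcPay bcPay f n).1 :=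
    key_mem f hf n (k, 0) (Or.inr rfl)
  have h12 : SigmaSec2 bcPay bcPay f n k = SigmaSec1 bcPay bcPay f n k := by
    unfold SigmaSec1 SigmaSec2
    rw [← sigma_symm f n]
  have hmain : SigmaSec1 bcPay bcPay f n k = {0} := by
    ext a
    simp only [Set.mem_singleton_iff]
    exact ⟨fun h => huniq a h, fun h => h ▸ hmem1⟩
  exact ⟨hmain, h12.trans hmain⟩
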